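/- The one-rule-per-step semi-naive evaluation produces exactly the same inferences as the naive rule-by-rule evaluation based on the same fair sequence of rules: for every program P, database instance I, fair sequence r(1), r(2), … of rules of P, every predicate p, and every step i ≥ 0, the set Δ^{[0,i]}_p computed by SNE equals the set of facts with predicate p contained in P̂ⁱ(I). -/

import Mathlib

namespace Datalog

/-- A term is a constant or a variable. -/
inductive Term (C V : Type) where
  | const : C → Term C V
  | var : V → Term C V

/-- An atom `p(t⃗)` with `|t⃗| = ar p`. -/
structure Atom (Pred C V : Type) (ar : Pred → ℕ) where
  pred : Pred
  args : List (Term C V)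
  hlen : args.length = ar pred

/-- A fact is a variable-free atom. -/
structure Fact (Pred C : Type) (ar : Pred → ℕ) where
  pred : Pred
  args : List C
  hlen : args.length = ar pred

variable {Pred C V : Type} {ar : Pred → ℕ}

/-- Applying a ground substitution `g : V → C` to a term. -/
def Term.grnd (g : V → C) : Term C V → C
  | .const c => c
  | .var v => g v

/-- Applying a ground substitution to an atom yields a fact. -/
def Atom.grnd (g : V → C) (a : Atom Pred C V ar) : Fact Pred C ar :=
  ⟨a.pred, a.args.map (Term.grnd g), by simp [a.hlen]⟩

/-- Applying a (general) substitution `σ : V → Term C V` to a term. -/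
def Term.subst (σ : V → Term C V) : Term C V → Term C V
  | .const c => .const c
  | .var v => σ v

/-- Applying a substitution to an atom. -/
def Atom.subst (σ : V → Term C V) (a : Atom Pred C V ar) : Atom Pred C V ar :=
  ⟨a.pred, a.args.map (Term.subst σ), by simp [a.hlen]⟩

/-- The variables of a term. -/
def Term.vars : Term C V → Set V
  | .const _ => ∅
  | .var v => {v}

/-- The variables of an atom. -/
def Atom.vars (a : Atom Pred C V ar) : Set V := ⋃ t ∈ a.args, Term.vars t

/-- An atom is ground if all of its arguments are constants. -/
def Atom.isGround (a : Atom Pred C V ar) : Prop := ∀ t ∈ a.args, ∃ c, t = Term.const c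

/-- The ground atom corresponding to a fact. -/
def Fact.toAtom (f : Fact Pred C ar) : Atom Pred C V ar :=
  ⟨f.pred, f.args.map Term.const, by simp [f.hlen]⟩

/-- Two atoms unify if some substitution maps them to the same atom. -/
def unifiable (A B : Atom Pred C V ar) : Prop :=
  ∃ σ : V → Term C V, Atom.subst σ A = Atom.subst σ B

/-- `θ` is a most general unifier of `A` and `B`. -/
def isMGU (θ : V → Term C V) (A B : Atom Pred C V ar) : Prop :=
  Atom.subst θ A = Atom.subst θ B ∧
    ∀ η : V → Term C V, Atom.subst η A = Atom.subst η B →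
      ∃ δ : V → Term C V, ∀ v, η v = Term.subst δ (θ v)

/-- A rule `H ← B₁, …, Bₙ`. -/
structure Rule (Pred C V : Type) (ar : Pred → ℕ) where
  head : Atom Pred C V ar
  body : List (Atom Pred C V ar)

/-- A rule is safe if every variable of the head occurs in some body atom. -/
def Rule.safe (r : Rule Pred C V ar) : Prop :=
  r.head.vars ⊆ ⋃ b ∈ r.body, Atom.vars b

/-- Applying a substitution to a rule. -/
def Rule.subst (σ : V → Term C V) (r : Rule Pred C V ar) : Rule Pred C V ar :=
  ⟨Atom.subst σ r.head, r.body.map (Atom.subst σ)⟩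

/-- A rule is trivially redundant if its head atom occurs among its body atoms. -/
def Rule.trivRedundant (r : Rule Pred C V ar) : Prop := r.head ∈ r.body

/-- The ground substitution `g` viewed as a substitution. -/
def grndSub (g : V → C) : V → Term C V := fun v => Term.const (g v)

/-- `r(J) = { Hσ | Hσ is a fact and Bᵢσ ∈ J for all i }`. -/
def Rule.app (r : Rule Pred C V ar) (J : Set (Fact Pred C ar)) : Set (Fact Pred C ar) :=
  { f | ∃ g : V → C, f = Atom.grnd g r.head ∧ ∀ b ∈ r.body, Atom.grnd g b ∈ J }

/-- `P(J) = ⋃_{r ∈ P} r(J)`. -/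
def progApp (Prog : Set (Rule Pred C V ar)) (J : Set (Fact Pred C ar)) :
    Set (Fact Pred C ar) :=
  ⋃ r ∈ Prog, Rule.app r J

/-- `P⁰(I) = I`, `P^{i+1}(I) = Pⁱ(I) ∪ P(Pⁱ(I))`. -/
def iter (Prog : Set (Rule Pred C V ar)) (I : Set (Fact Pred C ar)) :
    ℕ → Set (Fact Pred C ar)
  | 0 => I
  | n + 1 => iter Prog I n ∪ progApp Prog (iter Prog I n)

/-- The materialization `P^∞(I) = ⋃_i Pⁱ(I)`. -/
def mat (Prog : Set (Rule Pred C V ar)) (I : Set (Fact Pred C ar)) :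
    Set (Fact Pred C ar) :=
  ⋃ n, iter Prog I n

/-- Naive rule-by-rule evaluation: `P̂⁰(I) = I`,
`P̂^{ℓ+1}(I) = P̂^ℓ(I) ∪ r(ℓ+1)(P̂^ℓ(I))`. -/
def naive (seq : ℕ → Rule Pred C V ar) (I : Set (Fact Pred C ar)) :
    ℕ → Set (Fact Pred C ar)
  | 0 => I
  | ℓ + 1 => naive seq I ℓ ∪ Rule.app (seq (ℓ + 1)) (naive seq I ℓ)

/-! ## Rules in EDB/IDB form and semi-naive evaluation -/

/-- A rule `p(t⃗) ← e₁(t⃗₁), …, eₙ(t⃗ₙ), q₁(s⃗₁), …, q_m(s⃗_m)` where the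
`eᵢ` are EDB atoms and the `qᵢ` are IDB atoms. -/
structure SRule (Pred C V : Type) (ar : Pred → ℕ) where
  head : Atom Pred C V ar
  ebody : List (Atom Pred C V ar)
  ibody : List (Atom Pred C V ar)

/-- The plain rule corresponding to an EDB/IDB-structured rule. -/
def SRule.toRule (r : SRule Pred C V ar) : Rule Pred C V ar := ⟨r.head, r.ebody ++ r.ibody⟩

/-- Safety of a structured rule. -/
def SRule.safe (r : SRule Pred C V ar) : Prop := r.toRule.safe

/-- The variables of a structured rule. -/
def SRule.vars (r : SRule Pred C V ar) : Set V :=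
  r.head.vars ∪ ((⋃ a ∈ r.ebody, Atom.vars a) ∪ ⋃ a ∈ r.ibody, Atom.vars a)

/-- Renaming the variables of a structured rule along `ι`. -/
def SRule.rename (ι : V → V) (r : SRule Pred C V ar) : SRule Pred C V ar :=
  ⟨Atom.subst (fun v => Term.var (ι v)) r.head,
   r.ebody.map (Atom.subst (fun v => Term.var (ι v))),
   r.ibody.map (Atom.subst (fun v => Term.var (ι v)))⟩

/-- A predicate is intensional (IDB) for a program if it occurs in the head of a rule. -/
def isIDB (Prog : Set (SRule Pred C V ar)) (p : Pred) : Prop :=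
  ∃ r ∈ Prog, r.head.pred = p

/-- `P(J)` for a program of structured rules. -/
def sprogApp (Prog : Set (SRule Pred C V ar)) (J : Set (Fact Pred C ar)) :
    Set (Fact Pred C ar) :=
  ⋃ r ∈ Prog, Rule.app r.toRule J

/-- `Pⁱ(I)` for a program of structured rules. -/
def siter (Prog : Set (SRule Pred C V ar)) (I : Set (Fact Pred C ar)) :
    ℕ → Set (Fact Pred C ar)
  | 0 => I
  | n + 1 => siter Prog I n ∪ sprogApp Prog (siter Prog I n)

/-- `P^∞(I)` for a program of structured rules. -/
def smat (Prog : Set (SRule Pred C V ar)) (I : Set (Fact Pred C ar)) :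
    Set (Fact Pred C ar) :=
  ⋃ n, siter Prog I n

/-- Naive rule-by-rule evaluation for structured rules. -/
def naiveS (seq : ℕ → SRule Pred C V ar) (I : Set (Fact Pred C ar)) :
    ℕ → Set (Fact Pred C ar)
  | 0 => I
  | ℓ + 1 => naiveS seq I ℓ ∪ Rule.app (seq (ℓ + 1)).toRule (naiveS seq I ℓ)

/-- `Δ^{[l,u]} := ⋃_{k ∈ [l,u]} Δ^k`. -/
def cumRange (D : ℕ → Set (Fact Pred C ar)) (l u : ℕ) : Set (Fact Pred C ar) :=
  ⋃ k ∈ Set.Icc l u, D k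

/-- The step `j < i` at which the rule applied at step `i` was last applied
(`j = 0` if it was never applied before). -/
noncomputable def lastApp (seq : ℕ → SRule Pred C V ar) (i : ℕ) : ℕ :=
  sSup {k | 1 ≤ k ∧ k < i ∧ seq k = seq i}

/-- The set `tmp_p` of facts derived by the semi-naive application at step `i+1` of a rule
`r` that was last applied at step `j`, given the family `D` of previously derived
`Δ`-sets: all facts `p(t⃗)σ` for ground `σ` such that all EDB atoms match in `I` and,
for some `ℓ ∈ {1,…,m}`, `s⃗_aσ ∈ Δ^{[0,i]}` for `a < ℓ`, `s⃗_ℓσ ∈ Δ^{[j,i]}`, and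
`s⃗_aσ ∈ Δ^{[0,j-1]}` for `a > ℓ`. (A rule without IDB body atoms is evaluated over
`I` alone.) -/
def sneTmp (I : Set (Fact Pred C ar)) (r : SRule Pred C V ar) (j i : ℕ)
    (D : ℕ → Set (Fact Pred C ar)) : Set (Fact Pred C ar) :=
  { f | ∃ g : V → C, f = Atom.grnd g r.head ∧ (∀ e ∈ r.ebody, Atom.grnd g e ∈ I) ∧
      (r.ibody = [] ∨
        ∃ ℓ : Fin r.ibody.length,
          (∀ a : Fin r.ibody.length, a < ℓ →
              Atom.grnd g (r.ibody.get a) ∈ cumRange D 0 i) ∧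
          Atom.grnd g (r.ibody.get ℓ) ∈ cumRange D j i ∧
          (∀ a : Fin r.ibody.length, ℓ < a →
              Atom.grnd g (r.ibody.get a) ∈ cumRange D 0 (j - 1))) }

/-- The history of the one-rule-per-step semi-naive evaluation: `sneHist seq I i k` is
the set `Δ^k` of new facts derived at step `k`, as computed after `i` steps
(`Δ⁰ = I`; at step `i+1` the rule `seq (i+1)` is applied and
`Δ^{i+1} = tmp \ Δ^{[0,i]}`). -/
noncomputable def sneHist (seq : ℕ → SRule Pred C V ar) (I : Set (Fact Pred C ar)) :
    ℕ → ℕ → Set (Fact Pred C ar)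
  | 0 => fun k => if k = 0 then I else ∅
  | i + 1 => fun k =>
      if k = i + 1 then
        sneTmp I (seq (i + 1)) (lastApp seq (i + 1)) i (sneHist seq I i) \
          cumRange (sneHist seq I i) 0 i
      else sneHist seq I i k

/-- `Δ^i`: the set of new facts derived at step `i` of the semi-naive evaluation. -/
noncomputable def sneDelta (seq : ℕ → SRule Pred C V ar) (I : Set (Fact Pred C ar))
    (i : ℕ) : Set (Fact Pred C ar) :=
  sneHist seq I i i

/-- The SNE variant of rule `r` with one relation `Rel a` prescribed for each IDB body
atom: it derives all facts `p(t⃗)σ` for ground `σ` such that all EDB atoms match in `I`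
and `s⃗_aσ ∈ Rel a` for every IDB body atom `q_a(s⃗_a)`. -/
def sneVariant (I : Set (Fact Pred C ar)) (r : SRule Pred C V ar)
    (Rel : ℕ → Set (Fact Pred C ar)) : Set (Fact Pred C ar) :=
  { f | ∃ g : V → C, f = Atom.grnd g r.head ∧ (∀ e ∈ r.ebody, Atom.grnd g e ∈ I) ∧
      ∀ a : Fin r.ibody.length, Atom.grnd g (r.ibody.get a) ∈ Rel a }

/-- `R_k`: the partial left-to-right join, i.e. the ground substitutions matching all
EDB atoms in `I` and the first `k` IDB body atoms in their prescribed relations. -/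
def partialJoin (I : Set (Fact Pred C ar)) (r : SRule Pred C V ar)
    (Rel : ℕ → Set (Fact Pred C ar)) (k : ℕ) : Set (V → C) :=
  { g | (∀ e ∈ r.ebody, Atom.grnd g e ∈ I) ∧
      ∀ a : Fin r.ibody.length, (a : ℕ) < k → Atom.grnd g (r.ibody.get a) ∈ Rel a }

/-- The resolvent of `r` with the (already renamed-apart) rule `ro` on the `k`-th IDB
body atom of `r`, using the unifier `θ`. -/
def resolvent (r ro : SRule Pred C V ar) (k : ℕ) (θ : V → Term C V) :
    Rule Pred C V ar :=
  ⟨Atom.subst θ r.head,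
   ((r.ebody ++ r.ibody.take k) ++ (ro.ebody ++ ro.ibody) ++ r.ibody.drop (k + 1)).map
     (Atom.subst θ)⟩


/-! ## Auxiliary lemmas -/

lemma mem_cumRange {D : ℕ → Set (Fact Pred C ar)} {l u : ℕ} {f : Fact Pred C ar} :
    f ∈ cumRange D l u ↔ ∃ k, l ≤ k ∧ k ≤ u ∧ f ∈ D k := by
  simp [cumRange, Set.mem_Icc, and_assoc]

lemma cumRange_mono_upper {D : ℕ → Set (Fact Pred C ar)} {l u u' : ℕ} (h : u ≤ u') :
    cumRange D l u ⊆ cumRange D l u' := by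
  intro f hf
  rw [mem_cumRange] at hf ⊢
  obtain ⟨k, h1, h2, h3⟩ := hf
  exact ⟨k, h1, h2.trans h, h3⟩

lemma cumRange_lower_zero {D : ℕ → Set (Fact Pred C ar)} {l u : ℕ} :
    cumRange D l u ⊆ cumRange D 0 u := by
  intro f hf
  rw [mem_cumRange] at hf ⊢
  obtain ⟨k, _, h2, h3⟩ := hf
  exact ⟨k, Nat.zero_le _, h2, h3⟩

lemma sneHist_stable (seq : ℕ → SRule Pred C V ar) (I : Set (Fact Pred C ar)) :
    ∀ i k, k ≤ i → sneHist seq I i k = sneHist seq I k k := by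
  intro i
  induction i with
  | zero => intro k hk; rw [Nat.le_zero.mp hk]
  | succ i IH =>
      intro k hk
      by_cases h : k = i + 1
      · subst h; rfl
      · have hk' : k ≤ i := by omega
        have : sneHist seq I (i + 1) k = sneHist seq I i k := by
          simp [sneHist, h]
        rw [this, IH k hk']

lemma cumRange_hist (seq : ℕ → SRule Pred C V ar) (I : Set (Fact Pred C ar))
    {i l u : ℕ} (hu : u ≤ i) :
    cumRange (sneHist seq I i) l u = cumRange (sneDelta seq I) l u := by
  ext f
  rw [mem_cumRange, mem_cumRange]
  constructor <;> rintro ⟨k, h1, h2, h3⟩ <;> refine ⟨k, h1, h2, ?_⟩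
  · rwa [sneHist_stable seq I i k (h2.trans hu)] at h3
  · rwa [sneHist_stable seq I i k (h2.trans hu)]

lemma sneDelta_zero (seq : ℕ → SRule Pred C V ar) (I : Set (Fact Pred C ar)) :
    sneDelta seq I 0 = I := by
  simp [sneDelta, sneHist]

lemma sneDelta_succ (seq : ℕ → SRule Pred C V ar) (I : Set (Fact Pred C ar)) (i : ℕ) :
    sneDelta seq I (i + 1) =
      sneTmp I (seq (i + 1)) (lastApp seq (i + 1)) i (sneHist seq I i) \
        cumRange (sneHist seq I i) 0 i := by
  simp [sneDelta, sneHist]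

lemma lastApp_spec (seq : ℕ → SRule Pred C V ar) (i : ℕ) :
    lastApp seq (i + 1) = 0 ∨
      (1 ≤ lastApp seq (i + 1) ∧ lastApp seq (i + 1) ≤ i ∧
        seq (lastApp seq (i + 1)) = seq (i + 1)) := by
  set S : Set ℕ := {k | 1 ≤ k ∧ k < i + 1 ∧ seq k = seq (i + 1)} with hS
  rcases S.eq_empty_or_nonempty with h | h
  · left
    simp only [lastApp, ← hS, h]
    exact csSup_empty
  · right
    have hbdd : BddAbove S := ⟨i + 1, fun k hk => le_of_lt hk.2.1⟩
    have hmem : sSup S ∈ S := Nat.sSup_mem h hbdd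
    have hL : lastApp seq (i + 1) = sSup S := rfl
    rw [hL]
    exact ⟨hmem.1, Nat.lt_succ_iff.mp hmem.2.1, hmem.2.2⟩

lemma exists_max_fin {m : ℕ} (S : Set (Fin m)) (h : S.Nonempty) :
    ∃ ℓ ∈ S, ∀ a ∈ S, a ≤ ℓ := by
  classical
  have hne : S.toFinite.toFinset.Nonempty := by
    simpa [Set.Finite.toFinset] using h
  refine ⟨S.toFinite.toFinset.max' hne, ?_, ?_⟩
  · have := S.toFinite.toFinset.max'_mem hne
    simpa using this
  · intro a ha
    exact S.toFinite.toFinset.le_max' a (by simpa using ha)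

/-- Membership in `sneTmp` implies membership in `Δ^{[0,i+1]}`. -/
lemma sneTmp_subset_cum (seq : ℕ → SRule Pred C V ar) (I : Set (Fact Pred C ar))
    (i : ℕ) :
    sneTmp I (seq (i + 1)) (lastApp seq (i + 1)) i (sneHist seq I i) ⊆
      cumRange (sneDelta seq I) 0 (i + 1) := by
  intro f hf
  by_cases h : f ∈ cumRange (sneHist seq I i) 0 i
  · rw [cumRange_hist seq I le_rfl] at h
    exact cumRange_mono_upper (Nat.le_succ i) h
  · have : f ∈ sneDelta seq I (i + 1) := by
      rw [sneDelta_succ]; exact ⟨hf, h⟩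
    rw [mem_cumRange]
    exact ⟨i + 1, Nat.zero_le _, le_rfl, this⟩

/-- **Completeness of semi-naive application**: if a rule fires on facts already in
`Δ^{[0,i]}`, its conclusion is in `Δ^{[0,i+1]}`. -/
lemma sne_complete (seq : ℕ → SRule Pred C V ar) (I : Set (Fact Pred C ar)) :
    ∀ i (g : V → C),
      (∀ e ∈ (seq (i + 1)).ebody, Atom.grnd g e ∈ I) →
      (∀ a : Fin (seq (i + 1)).ibody.length,
          Atom.grnd g ((seq (i + 1)).ibody.get a) ∈ cumRange (sneDelta seq I) 0 i) →
      Atom.grnd g (seq (i + 1)).head ∈ cumRange (sneDelta seq I) 0 (i + 1) := by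
  intro i
  induction i using Nat.strong_induction_on with
  | _ i IH =>
    intro g he hi
    rcases lastApp_spec seq i with hj0 | ⟨hj1, hji, hjseq⟩
    · -- rule never applied before: take ℓ the last IDB atom
      apply sneTmp_subset_cum seq I i
      refine ⟨g, rfl, he, ?_⟩
      rcases eq_or_ne (seq (i + 1)).ibody [] with hnil | hnil
      · exact Or.inl hnil
      · right
        have hm : 0 < (seq (i + 1)).ibody.length := List.length_pos_iff.mpr hnil
        refine ⟨⟨(seq (i + 1)).ibody.length - 1, by omega⟩, ?_, ?_, ?_⟩
        · intro a _
          rw [cumRange_hist seq I le_rfl]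
          exact hi a
        · rw [hj0, cumRange_hist seq I le_rfl]
          exact hi _
        · intro a ha
          exfalso
          have := a.2
          simp only [Fin.lt_def] at ha
          omega
    · -- rule last applied at step j ≥ 1
      by_cases hall : ∀ a : Fin (seq (i + 1)).ibody.length,
          Atom.grnd g ((seq (i + 1)).ibody.get a) ∈ cumRange (sneDelta seq I) 0 (lastApp seq (i + 1) - 1)
      · -- all body facts old: conclusion already derived at step j
        have hjlt : lastApp seq (i + 1) - 1 < i := by omega
        have hjsucc : lastApp seq (i + 1) - 1 + 1 = lastApp seq (i + 1) := by omega
        have := IH (lastApp seq (i + 1) - 1) hjlt g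
        rw [hjsucc, hjseq] at this
        exact cumRange_mono_upper (by omega) (this he hall)
      · push_neg at hall
        set S : Set (Fin (seq (i + 1)).ibody.length) :=
          {a | Atom.grnd g ((seq (i + 1)).ibody.get a) ∉ cumRange (sneDelta seq I) 0 (lastApp seq (i + 1) - 1)}
          with hSdef
        obtain ⟨ℓ, hℓS, hℓmax⟩ := exists_max_fin S hall
        apply sneTmp_subset_cum seq I i
        refine ⟨g, rfl, he, Or.inr ⟨ℓ, ?_, ?_, ?_⟩⟩
        · intro a _
          rw [cumRange_hist seq I le_rfl]
          exact hi a
        · rw [cumRange_hist seq I le_rfl]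
          have h1 := hi ℓ
          rw [mem_cumRange] at h1
          obtain ⟨k, _, hk2, hk3⟩ := h1
          have hkj : lastApp seq (i + 1) ≤ k := by
            by_contra hc
            exact hℓS (mem_cumRange.mpr ⟨k, Nat.zero_le _, by omega, hk3⟩)
          exact mem_cumRange.mpr ⟨k, hkj, hk2, hk3⟩
        · intro a ha
          rw [cumRange_hist seq I (by omega)]
          by_contra hc
          exact absurd (hℓmax a hc) (not_le.mpr ha)

/-- Every fact in the naive evaluation is either in `I` or has an IDB predicate. -/
lemma naiveS_pred {Prog : Set (SRule Pred C V ar)}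
    (seq : ℕ → SRule Pred C V ar) (hseq : ∀ k, 1 ≤ k → seq k ∈ Prog)
    (I : Set (Fact Pred C ar)) :
    ∀ i, ∀ f ∈ naiveS seq I i, f ∈ I ∨ isIDB Prog f.pred := by
  intro i
  induction i with
  | zero => intro f hf; exact Or.inl hf
  | succ i IH =>
      intro f hf
      rcases hf with hf | hf
      · exact IH f hf
      · obtain ⟨g, rfl, -⟩ := hf
        exact Or.inr ⟨seq (i + 1), hseq (i + 1) (by omega), rfl⟩

lemma I_subset_naiveS (seq : ℕ → SRule Pred C V ar) (I : Set (Fact Pred C ar)) :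
    ∀ i, I ⊆ naiveS seq I i := by
  intro i
  induction i with
  | zero => exact le_rfl
  | succ i IH => exact IH.trans Set.subset_union_left

/-- The one-rule-per-step semi-naive evaluation produces exactly the
same inferences as the naive rule-by-rule evaluation based on the same fair sequence of
rules: for every predicate `p` and every step `i ≥ 0`, the set `Δ^{[0,i]}_p` computed
by SNE equals the set of facts with predicate `p` contained in `P̂ⁱ(I)`. -/
theorem sne_equals_naive {Pred C V : Type} [Infinite C] [Infinite V]
    {ar : Pred → ℕ}
    (Prog : Set (SRule Pred C V ar)) (hfin : Prog.Finite)
    (hsafe : ∀ r ∈ Prog, r.safe)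
    (hstruct : ∀ r ∈ Prog, (∀ a ∈ r.ebody, ¬ isIDB Prog a.pred) ∧
      ∀ a ∈ r.ibody, isIDB Prog a.pred)
    (I : Set (Fact Pred C ar)) (hI : I.Finite)
    (hIedb : ∀ f ∈ I, ¬ isIDB Prog f.pred)
    (seq : ℕ → SRule Pred C V ar) (hseq : ∀ k, 1 ≤ k → seq k ∈ Prog)
    (hfair : ∀ r ∈ Prog, ∀ N, ∃ k, N ≤ k ∧ seq k = r) :
    ∀ (p : Pred) (i : ℕ),
      {f | f ∈ cumRange (sneDelta seq I) 0 i ∧ f.pred = p} =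
      {f | f ∈ naiveS seq I i ∧ f.pred = p} := by
  have key : ∀ i, cumRange (sneDelta seq I) 0 i = naiveS seq I i := by
    intro i
    induction i with
    | zero =>
        ext f
        show f ∈ cumRange (sneDelta seq I) 0 0 ↔ f ∈ I
        rw [mem_cumRange]
        constructor
        · rintro ⟨k, -, hk, hf⟩
          rw [Nat.le_zero] at hk
          subst hk
          rwa [sneDelta_zero] at hf
        · intro hf
          exact ⟨0, le_rfl, le_rfl, by rwa [sneDelta_zero]⟩
    | succ i IH =>
        have hj1i : lastApp seq (i + 1) - 1 ≤ i := by
          rcases lastApp_spec seq i with h | ⟨-, h, -⟩ <;> omega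
        apply Set.Subset.antisymm
        · intro f hf
          rw [mem_cumRange] at hf
          obtain ⟨k, -, hk2, hk3⟩ := hf
          rcases Nat.lt_or_ge k (i + 1) with hki | hki
          · have hmem : f ∈ cumRange (sneDelta seq I) 0 i :=
              mem_cumRange.mpr ⟨k, Nat.zero_le _, by omega, hk3⟩
            rw [IH] at hmem
            exact Or.inl hmem
          · have hk : k = i + 1 := by omega
            subst hk
            rw [sneDelta_succ] at hk3
            obtain ⟨⟨g, rfl, he, hdisj⟩, -⟩ := hk3
            right
            refine ⟨g, rfl, ?_⟩
            intro b hb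
            rcases List.mem_append.mp hb with hb' | hb'
            · exact I_subset_naiveS seq I i (he b hb')
            · obtain ⟨a, ha⟩ := List.mem_iff_get.mp hb'
              rcases hdisj with hnil | ⟨ℓ, h1, h2, h3⟩
              · rw [hnil] at hb'; simp at hb'
              · rw [← IH, ← ha]
                rcases lt_trichotomy a ℓ with h | h | h
                · have := h1 a h
                  rwa [cumRange_hist seq I le_rfl] at this
                · subst h
                  have := cumRange_lower_zero h2
                  rwa [cumRange_hist seq I le_rfl] at this
                · have := cumRange_mono_upper hj1i (h3 a h)
                  rwa [cumRange_hist seq I le_rfl] at this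
        · intro f hf
          rcases hf with hf | hf
          · rw [← IH] at hf
            exact cumRange_mono_upper (Nat.le_succ i) hf
          · obtain ⟨g, rfl, hb⟩ := hf
            apply sne_complete seq I i g
            · intro e hee
              have h1 := hb e (List.mem_append_left _ hee)
              rcases naiveS_pred seq hseq I i _ h1 with h | h
              · exact h
              · exact absurd h
                  ((hstruct _ (hseq (i + 1) (by omega))).1 e hee)
            · intro a
              have h1 := hb _ (List.mem_append_right _ (List.get_mem _ a))
              rwa [← IH] at h1
  intro p i
  rw [key i]
end Datalog
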